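/- arXiv:1403.7497 — 2 statements merged into one kernel-verified Lean document; each statement's English description precedes it below -/
import Mathlib

section
/- Consider the reconstruction scheme for the Burgers equation $f(u) = u^2/2$ with $V_{mesh}=0$, time step $\Delta t$, cell width $\Delta x$, applied to data representing a single entropy shock: $u_j = u_l$ for $j < j_0$, $u_{j_0} = \frac{\delta}{\Delta x} u_l + \frac{\Delta x - \delta}{\Delta x} u_r$, $u_j = u_r$ for $j > j_0$, where $u_l > u_r > 0$, $\delta \in [0, \Delta x]$, $\sigma = (u_l+u_r)/2$, and suppose $\delta + \sigma \Delta t \le \Delta x$ (the shock does not leave cell $j_0$). Then after one time step of the scheme, $u_j^{new} = u_l$ for $j < j_0$, $u_{j_0}^{new} = \frac{\delta'}{\Delta x} u_l + \frac{\Delta x - \delta'}{\Delta x} u_r$ with $\delta' = \delta + \sigma \Delta t$, and $u_j^{new} = u_r$ for $j > j_0$. -/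
theorem stmt_6 (dx dt : ℝ) (hdx : 0 < dx) (hdt : 0 < dt)
    (f : ℝ → ℝ) (hf : f = fun u => u ^ 2 / 2)
    (ul ur : ℝ) (hlr : ul > ur) (hr : ur > 0)
    (δ : ℝ) (hδ0 : 0 ≤ δ) (hδ1 : δ ≤ dx)
    (σ : ℝ) (hσ : σ = (ul + ur) / 2)
    (hstay : δ + σ * dt ≤ dx)
    (j0 : ℤ) (u : ℤ → ℝ)
    (hu : u = fun j => if j < j0 then ul
      else if j = j0 then δ / dx * ul + (dx - δ) / dx * ur else ur)
    -- fluxes: f_{j+1/2} indexed by j; reconstruction in cell j0 gives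
    -- f_{j0-1/2} = f ul, f_{j0+1/2} = f ur (crossing time exceeds dt),
    -- elsewhere f_{j+1/2} = f (u j)
    (flux : ℤ → ℝ)
    (hflux : flux = fun j => if j < j0 then f ul else f ur)
    (unew : ℤ → ℝ)
    (hunew : unew = fun j => u j - dt / dx * (flux j - flux (j - 1)))
    (δ' : ℝ) (hδ' : δ' = δ + σ * dt) :
    (∀ j < j0, unew j = ul) ∧
    unew j0 = δ' / dx * ul + (dx - δ') / dx * ur ∧
    (∀ j > j0, unew j = ur) := by
  subst hf hσ hu hflux hunew hδ'
  refine ⟨fun j hj => ?_, ?_, fun j hj => ?_⟩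
  · simp only
    rw [if_pos hj, if_pos hj, if_pos (by omega : j - 1 < j0)]
    ring
  · simp only
    simp only [lt_irrefl, if_false, if_pos (show j0 - 1 < j0 by omega), if_true]
    field_simp
    ring
  · simp only
    rw [if_neg (by omega : ¬ j < j0), if_neg (by omega : j ≠ j0),
      if_neg (by omega : ¬ j < j0), if_neg (by omega : ¬ j - 1 < j0)]
    ring
end

section
/- Consider the reconstruction scheme for the Burgers equation with $V_{mesh}=0$ applied to the pure shock data as above with $u_l > u_r > 0$, $\delta \in [0,\Delta x]$, $\sigma=(u_l+u_r)/2$, but now suppose $\delta + \sigma \Delta t > \Delta x$. With flux $f_{j_0+1/2} = \frac{\Delta x - \delta}{\Delta t}(u_r - u_l) + f(u_l)$, $f_{j_0-1/2} = f(u_l)$, $f_{j_0+3/2} = f(u_r)$, the updated values satisfy $u_{j_0}^{new} = u_l$ and $u_{j_0+1}^{new} = \frac{\delta'}{\Delta x} u_l + \frac{\Delta x - \delta'}{\Delta x} u_r$ where $\delta' = \delta + \sigma \Delta t - \Delta x$. -/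
theorem stmt_7 (dx dt : ℝ) (hdx : 0 < dx) (hdt : 0 < dt)
    (f : ℝ → ℝ) (hf : f = fun u => u ^ 2 / 2)
    (ul ur : ℝ) (hlr : ul > ur) (hr : ur > 0)
    (δ : ℝ) (hδ0 : 0 ≤ δ) (hδ1 : δ ≤ dx)
    (σ : ℝ) (hσ : σ = (ul + ur) / 2)
    (hcross : δ + σ * dt > dx)
    (j0 : ℤ) (u : ℤ → ℝ)
    (hu : u = fun j => if j < j0 then ul
      else if j = j0 then δ / dx * ul + (dx - δ) / dx * ur else ur)
    (flux : ℤ → ℝ)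
    (hflux : flux = fun j => if j < j0 then f ul
      else if j = j0 then (dx - δ) / dt * (ur - ul) + f ul else f ur)
    (unew : ℤ → ℝ)
    (hunew : unew = fun j => u j - dt / dx * (flux j - flux (j - 1)))
    (δ' : ℝ) (hδ' : δ' = δ + σ * dt - dx) :
    unew j0 = ul ∧ unew (j0 + 1) = δ' / dx * ul + (dx - δ') / dx * ur := by
  subst hf hσ hu hflux hunew hδ'
  constructor <;>
  · norm_num [show j0 - 1 < j0 by omega, show ¬ (j0 + 1 < j0) by omega,
      show ¬ (j0 + 1 = j0) by omega, show j0 + 1 - 1 = j0 by omega]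
    field_simp
    ring
end
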